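/- Every extreme point of the convex set of q-probability operators on H is a pure (rank-one) q-probability operator, i.e., has the form |ψ⟩⟨ψ| for some ψ ∈ H with |⟨1, ψ⟩| = 1. -/

import Mathlib

local notation "⟪" x ", " y "⟫" => @inner ℂ _ _ x y

/-- Every extreme point of the convex set of q-probability operators is a pure
(rank-one) q-probability operator, i.e., of the form |ψ⟩⟨ψ| with |⟨1,ψ⟩| = 1. -/
theorem stmt5 {H : Type*} [NormedAddCommGroup H] [InnerProductSpace ℂ H] [CompleteSpace H]
    (one : H) (hone : ‖one‖ = 1)
    (ρ : H →L[ℂ] H) (hρ : ρ.IsPositive) (hn : ⟪ρ one, one⟫ = 1)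
    (hext : ∀ (ρ₁ ρ₂ : H →L[ℂ] H), ρ₁.IsPositive → ρ₂.IsPositive →
      ⟪ρ₁ one, one⟫ = 1 → ⟪ρ₂ one, one⟫ = 1 →
      ∀ l : ℝ, 0 < l → l < 1 → ρ = (l : ℂ) • ρ₁ + ((1 - l : ℝ) : ℂ) • ρ₂ → ρ₁ = ρ₂) :
    ∃ ψ : H, ‖⟪one, ψ⟫‖ = 1 ∧ ρ = (innerSL ℂ ψ).smulRight ψ := by
  have hsym : ∀ x y : H, ⟪ρ x, y⟫ = ⟪x, ρ y⟫ :=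
    hρ.1
  set ψ : H := ρ one with hψdef
  have honeψ : ⟪one, ψ⟫ = 1 := by
    rw [hψdef, ← inner_conj_symm, hn, map_one]
  refine ⟨ψ, by rw [honeψ]; simp, ?_⟩
  set σ : H →L[ℂ] H := (innerSL ℂ ψ).smulRight ψ with hσdef
  have hσapp : ∀ x, σ x = ⟪ψ, x⟫ • ψ := fun x => rfl
  have hψone : ⟪ψ, one⟫ = 1 := hn
  -- key Cauchy–Schwarz inequality
  have key : ∀ x : H, ‖⟪ψ, x⟫‖ ^ 2 ≤ RCLike.re ⟪ρ x, x⟫ := by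
    intro x
    set b : ℂ := ⟪ρ x, one⟫ with hb
    have h1 : ⟪ρ one, x⟫ = (starRingEnd ℂ) b := by
      rw [hsym one x, ← inner_conj_symm, hb]
    have hψx : ⟪ψ, x⟫ = (starRingEnd ℂ) b := h1
    have hexp : ⟪ρ (x - (starRingEnd ℂ) b • one), x - (starRingEnd ℂ) b • one⟫
        = ⟪ρ x, x⟫ - b * (starRingEnd ℂ) b := by
      rw [map_sub, map_smul, inner_sub_left, inner_sub_right, inner_sub_right,
        inner_smul_left, inner_smul_right, inner_smul_left, inner_smul_right,
        hn, h1, ← hb]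
      ring_nf
    have h0 := hρ.2 (x - (starRingEnd ℂ) b • one)
    rw [ContinuousLinearMap.reApplyInnerSelf_apply, hexp] at h0
    have hre : RCLike.re (⟪ρ x, x⟫ - b * (starRingEnd ℂ) b)
        = RCLike.re ⟪ρ x, x⟫ - ‖b‖ ^ 2 := by
      rw [map_sub, mul_comm, RCLike.conj_mul]
      norm_cast
    rw [hre] at h0
    rw [hψx]
    simpa using h0
  -- σ is positive with ⟪σ 1, 1⟫ = 1
  have hσsym : ∀ x y : H, ⟪σ x, y⟫ = ⟪x, σ y⟫ := by
    intro x y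
    simp only [hσapp, inner_smul_left, inner_smul_right, inner_conj_symm]
    ring
  have hσpos : σ.IsPositive := by
    refine ⟨hσsym, fun x => ?_⟩
    rw [ContinuousLinearMap.reApplyInnerSelf_apply, hσapp, inner_smul_left,
      RCLike.conj_mul]
    norm_cast
    positivity
  have hσone : σ one = ψ := by rw [hσapp, hψone, one_smul]
  have hσn : ⟪σ one, one⟫ = 1 := by rw [hσone, hψone]
  -- δ = ρ - σ is positive and vanishes at one
  set δ : H →L[ℂ] H := ρ - σ with hδdef
  have hδsym : ∀ x y : H, ⟪δ x, y⟫ = ⟪x, δ y⟫ := by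
    intro x y
    simp only [hδdef, ContinuousLinearMap.sub_apply, inner_sub_left, inner_sub_right,
      hsym, hσsym]
  have hδpos : δ.IsPositive := by
    refine ⟨hδsym, fun x => ?_⟩
    rw [ContinuousLinearMap.reApplyInnerSelf_apply, hδdef, ContinuousLinearMap.sub_apply,
      inner_sub_left, map_sub]
    have : RCLike.re ⟪σ x, x⟫ = ‖⟪ψ, x⟫‖ ^ 2 := by
      rw [hσapp, inner_smul_left, RCLike.conj_mul]
      norm_cast
    rw [this]
    have := key x
    linarith
  have hδn : ⟪δ one, one⟫ = 0 := by
    rw [hδdef, ContinuousLinearMap.sub_apply, inner_sub_left, hn, hσn, sub_self]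
  -- apply extremality with ρ₁ = σ + δ + δ, ρ₂ = σ, l = 1/2
  have hρ₁pos : (σ + δ + δ).IsPositive := (hσpos.add hδpos).add hδpos
  have hρ₁n : ⟪(σ + δ + δ) one, one⟫ = 1 := by
    simp only [ContinuousLinearMap.add_apply, inner_add_left, hσn, hδn]
    ring
  have hdecomp : ρ = ((1/2 : ℝ) : ℂ) • (σ + δ + δ) + ((1 - 1/2 : ℝ) : ℂ) • σ := by
    have h12 : ((1 - 1/2 : ℝ) : ℂ) = ((1/2 : ℝ) : ℂ) := by norm_num
    rw [h12]
    have : ρ = σ + δ := by rw [hδdef]; abel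
    rw [this]
    push_cast
    module
  have heq := hext (σ + δ + δ) σ hρ₁pos hσpos hρ₁n hσn (1/2) (by norm_num) (by norm_num)
    hdecomp
  have hδ0 : δ = 0 := by
    have h2 : δ + δ = 0 := by
      have h := heq
      rw [add_assoc] at h
      exact (add_eq_left).mp h
    have h2' : (2 : ℂ) • δ = 0 := by rw [two_smul]; exact h2
    calc δ = (2 : ℂ)⁻¹ • ((2 : ℂ) • δ) := by rw [smul_smul]; norm_num
      _ = 0 := by rw [h2', smul_zero]
  have hfin : ρ - σ = 0 := by rw [← hδdef]; exact hδ0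
  exact sub_eq_zero.mp hfin
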